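/- Let a ∈ K = F_{2^τ}((π)) and let b in an algebraic closure of K satisfy b² + b = a. Then D(a) = (π^{−2t+1}) for some integer t > 0 if and only if K(b) is a ramified quadratic extension of K. -/

import Mathlib

noncomputable section

/-- The finite field with `2 ^ τ` elements. -/
abbrev Fq (τ : ℕ) := GaloisField 2 τ

/-- The field of formal Laurent series `K = F_{2^τ}((π))`. -/
abbrev Kk (τ : ℕ) := LaurentSeries (Fq τ)

/-- The ring of integers `O = F_{2^τ}[[π]]`. -/
abbrev Ok (τ : ℕ) := PowerSeries (Fq τ)

/-- The Artin–Schreier defect `D(a) = ⋂_{h ∈ K} (h² + h + a)`, an intersection of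
principal fractional `O`-ideals (as `O`-submodules of `K`). -/
def ASdefect (τ : ℕ) (a : Kk τ) : Submodule (Ok τ) (Kk τ) :=
  ⨅ h : Kk τ, Submodule.span (Ok τ) {h ^ 2 + h + a}

open IntermediateField

/-- The uniformizer `π` of `K`, viewed as a Laurent series. -/
def pp (τ : ℕ) : Kk τ := algebraMap (Ok τ) (Kk τ) PowerSeries.X

/-- `L/K` is a ramified quadratic extension: it has degree 2 and the ramification
index is 2, i.e. the value group grows; for a quadratic extension of the discretely
valued field `K` this says that some nonzero element of `L` has a norm of odd
valuation. (Recall `ν(f) = f.order` on `K = F_{2^τ}((π))`.) -/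
def IsRamifiedQuadExt (τ : ℕ)
    (L : IntermediateField (Kk τ) (AlgebraicClosure (Kk τ))) : Prop :=
  Module.finrank (Kk τ) L = 2 ∧
    ∃ x : L, x ≠ 0 ∧ Odd (HahnSeries.order (Algebra.norm (Kk τ) x))

namespace ASaux

open HahnSeries Finset

variable {F : Type*} [Field F]


open HahnSeries

variable {F : Type*} [Field F]

lemma comb {R : Type*} [CommRing R] (h2 : (2:R) = 0) (h g a : R) :
    (h + g)^2 + (h + g) + a = g^2 + g + (h^2 + h + a) := by
  linear_combination (h*g) * h2

lemma order_add_of_lt {x y : LaurentSeries F} (hx : x ≠ 0) (h : x.order < y.order) :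
    x + y ≠ 0 ∧ (x + y).order = x.order := by
  have hcoe : (x+y).coeff x.order ≠ 0 := by
    rw [HahnSeries.coeff_add, HahnSeries.coeff_eq_zero_of_lt_order h, add_zero]
    exact (HahnSeries.coeff_order_eq_zero.not.mpr hx)
  have hne : x + y ≠ 0 := fun h0 => hcoe (by simp [h0])
  refine ⟨hne, le_antisymm (HahnSeries.order_le_of_coeff_ne_zero hcoe) ?_⟩
  have hmin := HahnSeries.min_order_le_order_add hne (x := x) (y := y)
  have : min x.order y.order = x.order := min_eq_left h.le
  omega

lemma order_sq {h : LaurentSeries F} (hh : h ≠ 0) : (h^2).order = 2 * h.order := by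
  rw [pow_two, HahnSeries.order_mul hh hh]; ring

lemma AS_order_even_or_nonneg (h : LaurentSeries F) (hg : h^2 + h ≠ 0) :
    (0 ≤ (h^2+h).order) ∨ ((h^2+h).order < 0 ∧ Even ((h^2+h).order)) := by
  have hh : h ≠ 0 := by rintro rfl; simp at hg
  rcases lt_or_ge h.order 0 with hlt | hge
  · right
    have h2o : (h^2).order = 2 * h.order := order_sq hh
    have hlt2 : (h^2).order < h.order := by omega
    obtain ⟨-, heq⟩ := order_add_of_lt (pow_ne_zero 2 hh) hlt2
    refine ⟨by omega, ?_⟩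
    rw [heq, h2o]
    exact even_two_mul _
  · left
    have hmin := HahnSeries.min_order_le_order_add hg (x := h^2) (y := h)
    have h2o : (h^2).order = 2 * h.order := order_sq hh
    omega

lemma key1 {c : LaurentSeries F} (hc : c ≠ 0) (hneg : c.order < 0) (hodd : Odd c.order)
    (h : LaurentSeries F) :
    h^2 + h + c ≠ 0 ∧ (h^2 + h + c).order ≤ c.order := by
  by_cases hg : h^2 + h = 0
  · rw [hg, zero_add]; exact ⟨hc, le_rfl⟩
  have hne : (h^2+h).order ≠ c.order := by
    rcases AS_order_even_or_nonneg h hg with h1 | ⟨h2, h3⟩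
    · omega
    · intro e
      rw [e] at h3
      exact (Int.not_odd_iff_even.mpr h3) hodd
  rcases lt_or_gt_of_ne hne with hlt | hgt
  · obtain ⟨hne0, heq⟩ := order_add_of_lt hg hlt
    exact ⟨hne0, heq ▸ hlt.le⟩
  · have h' := order_add_of_lt hc hgt
    rw [add_comm] at h'
    exact ⟨h'.1, le_of_eq h'.2⟩



open HahnSeries

variable {F : Type*} [Field F]

lemma algebraMap_eq_coe (r : PowerSeries F) :
    algebraMap (PowerSeries F) (LaurentSeries F) r = HahnSeries.ofPowerSeries ℤ F r := by
  rw [LaurentSeries.coe_algebraMap]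

lemma nonneg_order_of_coeffs {f : LaurentSeries F} (hf : f ≠ 0)
    (h : ∀ n : ℤ, n < 0 → f.coeff n = 0) : 0 ≤ f.order := by
  by_contra hlt
  exact (HahnSeries.coeff_order_eq_zero.not.mpr hf) (h _ (by omega))

lemma mem_range_of_coeffs {f : LaurentSeries F} (hf : ∀ n : ℤ, n < 0 → f.coeff n = 0) :
    ∃ r : PowerSeries F, algebraMap (PowerSeries F) (LaurentSeries F) r = f := by
  refine ⟨PowerSeries.mk (fun n => f.coeff n), ?_⟩
  rw [algebraMap_eq_coe]
  ext n
  rw [show ((HahnSeries.ofPowerSeries ℤ F) (PowerSeries.mk fun n => f.coeff ↑n)).coeff n =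
      ((PowerSeries.mk fun (n : ℕ) => f.coeff ↑n : PowerSeries F) : LaurentSeries F).coeff n
      from rfl, PowerSeries.coeff_coe]
  split_ifs with hn
  · exact (hf n hn).symm
  · rw [PowerSeries.coeff_mk]
    congr 1
    omega

lemma algebraMap_order_nonneg {r : PowerSeries F}
    (hrne : algebraMap (PowerSeries F) (LaurentSeries F) r ≠ 0) :
    0 ≤ (algebraMap (PowerSeries F) (LaurentSeries F) r).order := by
  refine nonneg_order_of_coeffs hrne (fun n hn => ?_)
  rw [algebraMap_eq_coe,
    show ((HahnSeries.ofPowerSeries ℤ F) r).coeff n =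
      ((r : PowerSeries F) : LaurentSeries F).coeff n from rfl,
    PowerSeries.coeff_coe, if_pos hn]

lemma order_inv {x : LaurentSeries F} (hx : x ≠ 0) : (x⁻¹).order = - x.order := by
  have h1 : x * x⁻¹ = 1 := mul_inv_cancel₀ hx
  have := HahnSeries.order_mul hx (inv_ne_zero hx)
  rw [h1, HahnSeries.order_one] at this
  omega

lemma exists_algebraMap_mul_eq {x y : LaurentSeries F} (hx : x ≠ 0) (hy : y ≠ 0)
    (hord : x.order ≤ y.order) :
    ∃ r : PowerSeries F, algebraMap (PowerSeries F) (LaurentSeries F) r * x = y := by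
  have hq : y * x⁻¹ ≠ 0 := mul_ne_zero hy (inv_ne_zero hx)
  have hqo : 0 ≤ (y * x⁻¹).order := by
    rw [HahnSeries.order_mul hy (inv_ne_zero hx), order_inv hx]
    omega
  obtain ⟨r, hr⟩ := mem_range_of_coeffs (f := y * x⁻¹)
    (fun n hn => HahnSeries.coeff_eq_zero_of_lt_order (by omega))
  refine ⟨r, ?_⟩
  rw [hr]
  field_simp

lemma mem_span_singleton_iff {x : LaurentSeries F} (hx : x ≠ 0) (y : LaurentSeries F) :
    y ∈ Submodule.span (PowerSeries F) {x} ↔ y = 0 ∨ x.order ≤ y.order := by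
  rw [Submodule.mem_span_singleton]
  constructor
  · rintro ⟨r, rfl⟩
    rw [Algebra.smul_def]
    by_cases hrne : algebraMap (PowerSeries F) (LaurentSeries F) r = 0
    · left; rw [hrne, zero_mul]
    · right
      rw [HahnSeries.order_mul hrne hx]
      have := algebraMap_order_nonneg hrne
      omega
  · rintro (rfl | hord)
    · exact ⟨0, zero_smul _ _⟩
    · by_cases hy : y = 0
      · exact ⟨0, by simp [hy]⟩
      · obtain ⟨r, hr⟩ := exists_algebraMap_mul_eq hx hy hord
        exact ⟨r, by rw [Algebra.smul_def, hr]⟩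

lemma span_singleton_eq_of_order_eq {x y : LaurentSeries F} (hx : x ≠ 0) (hy : y ≠ 0)
    (h : x.order = y.order) :
    Submodule.span (PowerSeries F) {x} = Submodule.span (PowerSeries F) {y} := by
  apply le_antisymm <;>
    rw [Submodule.span_singleton_le_iff_mem, mem_span_singleton_iff]
  · right; omega
  · exact hy
  · right; omega
  · exact hx


lemma coeff_sq (h2 : (2:F) = 0) (f : PowerSeries F) (n : ℕ) :
    PowerSeries.coeff n (f^2) =
      if Even n then (PowerSeries.coeff (n/2) f)^2 else 0 := by
  rw [pow_two, PowerSeries.coeff_mul]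
  have hsplit : (antidiagonal n : Finset (ℕ × ℕ)) =
      (antidiagonal n).filter (fun p => p.1 = p.2) ∪
      (antidiagonal n).filter (fun p => ¬ p.1 = p.2) := (Finset.filter_union_filter_not_eq _ _).symm
  rw [hsplit, Finset.sum_union (Finset.disjoint_filter_filter_not _ _ _)]
  have hoff : ∑ p ∈ (antidiagonal n).filter (fun p => ¬ p.1 = p.2),
      PowerSeries.coeff p.1 f * PowerSeries.coeff p.2 f = 0 := by
    refine Finset.sum_involution (fun p _ => (p.2, p.1)) ?_ ?_ ?_ ?_
    · intro p _
      linear_combination (PowerSeries.coeff p.1 f * PowerSeries.coeff p.2 f) * h2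
    · intro p hp _
      simp only [Finset.mem_filter] at hp
      intro hcon
      exact hp.2 (congrArg Prod.fst hcon).symm
    · intro p hp
      simp only [Finset.mem_filter, Finset.HasAntidiagonal.mem_antidiagonal] at hp ⊢
      omega
    · intro p _
      rfl
  rw [hoff, add_zero]
  have hdiag : (antidiagonal n).filter (fun p : ℕ × ℕ => p.1 = p.2) =
      if Even n then {(n/2, n/2)} else ∅ := by
    ext p
    simp only [Finset.mem_filter, Finset.HasAntidiagonal.mem_antidiagonal]
    split_ifs with he
    · simp only [Finset.mem_singleton, Prod.ext_iff]
      rw [Nat.even_iff] at he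
      omega
    · simp only [Finset.notMem_empty, iff_false, not_and]
      rw [Nat.even_iff] at he
      omega
  rw [hdiag]
  split_ifs with he
  · rw [Finset.sum_singleton, pow_two]
  · rw [Finset.sum_empty]

def asCoeff (A : PowerSeries F) : ℕ → F
  | 0 => 0
  | (n+1) => PowerSeries.coeff (n+1) A +
      (if Even (n+1) then (asCoeff A ((n+1)/2))^2 else 0)
  decreasing_by exact Nat.div_lt_self (Nat.succ_pos n) one_lt_two

lemma AS_solve_ps (h2 : (2:F) = 0) (A : PowerSeries F)
    (h0 : PowerSeries.coeff 0 A = 0) :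
    ∃ u : PowerSeries F, u^2 + u = A := by
  refine ⟨PowerSeries.mk (asCoeff A), ?_⟩
  ext n
  rw [map_add, coeff_sq h2, PowerSeries.coeff_mk]
  cases n with
  | zero => simp [asCoeff, h0]
  | succ n =>
      have hc : ∀ k, PowerSeries.coeff k (PowerSeries.mk (asCoeff A)) = asCoeff A k :=
        fun k => PowerSeries.coeff_mk k _
      rw [hc, asCoeff]
      set T := (if Even (n+1) then (asCoeff A ((n+1)/2))^2 else 0) with hT
      linear_combination T * h2

lemma AS_solve (h2 : (2:F) = 0) {a : LaurentSeries F}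
    (ha : ∀ n : ℤ, n ≤ 0 → a.coeff n = 0) :
    ∃ h : LaurentSeries F, h^2 + h = a := by
  obtain ⟨A, hA⟩ := mem_range_of_coeffs (f := a) (fun n hn => ha n hn.le)
  have h0 : PowerSeries.coeff 0 A = 0 := by
    have hcoeff := HahnSeries.ofPowerSeries_apply_coeff (Γ := ℤ) (R := F) A 0
    rw [← algebraMap_eq_coe, hA] at hcoeff
    rw [← hcoeff]
    simpa using ha 0 le_rfl
  obtain ⟨u, hu⟩ := AS_solve_ps h2 A h0
  refine ⟨algebraMap (PowerSeries F) (LaurentSeries F) u, ?_⟩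
  rw [← map_pow, ← map_add, hu, hA]


end ASaux

namespace ASaux

variable {F : Type*} [Field F]

lemma two_eq_zero_K (h2 : (2:F) = 0) : (2 : LaurentSeries F) = 0 := by
  rw [← map_ofNat (HahnSeries.C : F →+* HahnSeries ℤ F) 2, h2, map_zero]

lemma step_even (h2 : (2:F) = 0) (hsq : ∀ c : F, ∃ e, e^2 = c) {a : LaurentSeries F}
    (ha : a ≠ 0) {m : ℕ} (hm : 1 ≤ m) (hord : a.order = -(2*m : ℤ)) :
    ∃ h1 : LaurentSeries F,
      h1^2 + h1 + a = 0 ∨ (h1^2+h1+a ≠ 0 ∧ -(2*m:ℤ) + 1 ≤ (h1^2+h1+a).order) := by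
  obtain ⟨e, he⟩ := hsq (a.coeff a.order)
  refine ⟨HahnSeries.single (-(m:ℤ)) e, ?_⟩
  set h1 : LaurentSeries F := HahnSeries.single (-(m:ℤ)) e with hh1
  by_cases hz : h1^2 + h1 + a = 0
  · exact Or.inl hz
  refine Or.inr ⟨hz, ?_⟩
  have hsqh : h1^2 = HahnSeries.single (-(2*m:ℤ)) (a.coeff a.order) := by
    rw [hh1, pow_two, HahnSeries.single_mul_single, ← he, pow_two]
    congr 1
    ring
  have hcoeffs : ∀ n : ℤ, n ≤ -(2*m:ℤ) → (h1^2 + h1 + a).coeff n = 0 := by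
    intro n hn
    rw [HahnSeries.coeff_add, HahnSeries.coeff_add, hsqh, hh1]
    rcases eq_or_lt_of_le hn with heq | hlt
    · rw [heq, HahnSeries.coeff_single_same, HahnSeries.coeff_single_of_ne (by omega),
        ← hord]
      have hc := (HahnSeries.coeff_order_eq_zero.not.mpr ha)
      rw [show a.coeff a.order = a.coeff a.order from rfl]
      rw [hord]
      linear_combination (a.coeff (-(2*(m:ℤ)))) * h2
    · rw [HahnSeries.coeff_single_of_ne (by omega), HahnSeries.coeff_single_of_ne (by omega),
        HahnSeries.coeff_eq_zero_of_lt_order (by omega)]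
      ring
  by_contra hcon
  exact (HahnSeries.coeff_order_eq_zero.not.mpr hz) (hcoeffs _ (by omega))

end ASaux

namespace ASaux

variable {F : Type*} [Field F]

lemma reduce_fuel (h2 : (2:F) = 0) (hsq : ∀ c : F, ∃ e, e^2 = c) :
    ∀ k : ℕ, ∀ a : LaurentSeries F, a ≠ 0 → -(k:ℤ) ≤ a.order →
    ∃ h : LaurentSeries F, h^2+h+a = 0 ∨ (h^2+h+a ≠ 0 ∧ 0 ≤ (h^2+h+a).order) ∨
      (h^2+h+a ≠ 0 ∧ (h^2+h+a).order < 0 ∧ Odd ((h^2+h+a).order)) := by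
  have h2K : (2 : LaurentSeries F) = 0 := two_eq_zero_K h2
  intro k
  induction k with
  | zero =>
      intro a ha h0
      exact ⟨0, Or.inr (Or.inl ⟨by simpa using ha, by simpa using h0⟩)⟩
  | succ k IH =>
      intro a ha hord
      rcases le_or_gt 0 a.order with h0 | hneg
      · exact ⟨0, Or.inr (Or.inl ⟨by simpa using ha, by simpa using h0⟩)⟩
      rcases Int.even_or_odd a.order with heven | hodd
      · obtain ⟨r, hr⟩ := heven
        set m : ℕ := (-a.order / 2).toNat with hmdef
        have hm : a.order = -(2*m : ℤ) ∧ 1 ≤ m := by omega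
        obtain ⟨h1, H⟩ := step_even h2 hsq ha hm.2 hm.1
        rcases H with hzero | ⟨hne, hge⟩
        · exact ⟨h1, Or.inl hzero⟩
        · obtain ⟨h2', H2⟩ := IH (h1^2+h1+a) hne (by omega)
          refine ⟨h1 + h2', ?_⟩
          have hcomb := comb h2K h1 h2' a
          rw [add_comm h1 h2'] at *
          rw [hcomb]
          exact H2
      · exact ⟨0, Or.inr (Or.inr ⟨by simpa using ha, by simpa using hneg,
          by simpa using hodd⟩)⟩

/-- Full Artin–Schreier reduction over `F⸨X⸩`. -/
lemma reduce (h2 : (2:F) = 0) (hsq : ∀ c : F, ∃ e, e^2 = c) (a : LaurentSeries F) :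
    ∃ h : LaurentSeries F,
      h^2+h+a = 0 ∨
      (h^2+h+a ≠ 0 ∧ (h^2+h+a).order < 0 ∧ Odd ((h^2+h+a).order)) ∨
      (h^2+h+a ≠ 0 ∧ (h^2+h+a).order = 0 ∧ ∀ e : F, e^2 + e ≠ (h^2+h+a).coeff 0) := by
  have h2K : (2 : LaurentSeries F) = 0 := two_eq_zero_K h2
  by_cases ha : a = 0
  · exact ⟨0, Or.inl (by simp [ha])⟩
  obtain ⟨h, H⟩ := reduce_fuel h2 hsq (-a.order).toNat a ha (by omega)
  rcases H with hzero | ⟨hne, hpos⟩ | hodd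
  · exact ⟨h, Or.inl hzero⟩
  on_goal 2 => exact ⟨h, Or.inr (Or.inl hodd)⟩
  set a₁ := h^2 + h + a with ha₁
  rcases eq_or_lt_of_le hpos with hzero' | hstrict
  · -- order a₁ = 0
    by_cases hres : ∃ e : F, e^2 + e = a₁.coeff 0
    · obtain ⟨e, he⟩ := hres
      set s : LaurentSeries F := HahnSeries.single (0:ℤ) e with hs
      have hcoeffs : ∀ n : ℤ, n ≤ 0 → (s^2 + s + a₁).coeff n = 0 := by
        intro n hn
        have hssq : s^2 = HahnSeries.single (0:ℤ) (e^2) := by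
          rw [hs, pow_two, HahnSeries.single_mul_single, ← pow_two]
          norm_num
        rw [HahnSeries.coeff_add, HahnSeries.coeff_add, hssq, hs]
        rcases eq_or_lt_of_le hn with heq | hlt
        · rw [heq, HahnSeries.coeff_single_same, HahnSeries.coeff_single_same]
          have : a₁.coeff 0 = a₁.coeff a₁.order := by rw [← hzero']
          linear_combination he + (a₁.coeff 0) * h2
        · rw [HahnSeries.coeff_single_of_ne (by omega), HahnSeries.coeff_single_of_ne (by omega),
            HahnSeries.coeff_eq_zero_of_lt_order (by omega)]
          ring
      obtain ⟨g, hg⟩ := AS_solve h2 (a := s^2 + s + a₁) hcoeffs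
      refine ⟨(h + s) + g, Or.inl ?_⟩
      have c1 := comb h2K (h + s) g a
      have c2 := comb h2K h s a
      rw [c1, c2, ← ha₁]
      linear_combination hg + (s^2 + s + a₁) * h2K
    · push_neg at hres
      exact ⟨h, Or.inr (Or.inr ⟨hne, hzero'.symm, hres⟩)⟩
  · -- order a₁ > 0
    have hcoeffs : ∀ n : ℤ, n ≤ 0 → a₁.coeff n = 0 :=
      fun n hn => HahnSeries.coeff_eq_zero_of_lt_order (by omega)
    obtain ⟨g, hg⟩ := AS_solve h2 hcoeffs
    refine ⟨h + g, Or.inl ?_⟩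
    have c1 := comb h2K h g a
    rw [c1, ← ha₁]
    linear_combination hg + a₁ * h2K

end ASaux

namespace ASaux

variable {F : Type*} [Field F]

lemma key2 (h2 : (2:F) = 0) {c : LaurentSeries F} (hc0 : c.order = 0)
    (hres : ∀ e : F, e^2 + e ≠ c.coeff 0) (h : LaurentSeries F) :
    h^2 + h + c ≠ 0 ∧ Even ((h^2 + h + c).order) := by
  have hc : c ≠ 0 := by
    intro h0
    exact hres 0 (by simp [h0])
  by_cases hg : h^2 + h = 0
  · rw [hg, zero_add]
    exact ⟨hc, by rw [hc0]; exact Even.zero⟩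
  rcases AS_order_even_or_nonneg h hg with hge | ⟨hlt, heven⟩
  · -- order (h²+h) ≥ 0 : look at coefficient 0
    have hh : h ≠ 0 := by rintro rfl; simp at hg
    have hhord : 0 ≤ h.order := by
      rcases le_or_gt 0 h.order with h' | h'
      · exact h'
      · exfalso
        have h2o : (h^2).order = 2 * h.order := order_sq hh
        obtain ⟨-, heq⟩ := order_add_of_lt (y := h) (pow_ne_zero 2 hh) (by omega)
        rw [heq] at hge
        omega
    have hcoeff0sq : (h^2).coeff 0 = (h.coeff 0)^2 := by
      rcases eq_or_lt_of_le hhord with heq | hlt'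
      · have h00 : h.order + h.order = 0 := by omega
        calc (h^2).coeff 0 = (h*h).coeff (h.order + h.order) := by rw [pow_two, h00]
          _ = h.leadingCoeff * h.leadingCoeff := HahnSeries.coeff_mul_order_add_order h h
          _ = (h.coeff 0)^2 := by rw [HahnSeries.leadingCoeff_eq, ← heq]; ring
      · rw [HahnSeries.coeff_eq_zero_of_lt_order (by rw [order_sq hh]; omega),
          HahnSeries.coeff_eq_zero_of_lt_order hlt']
        ring
    have hcoeff : (h^2 + h + c).coeff 0 = (h.coeff 0)^2 + h.coeff 0 + c.coeff 0 := by
      rw [HahnSeries.coeff_add, HahnSeries.coeff_add, hcoeff0sq]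
    have hne0 : (h^2 + h + c).coeff 0 ≠ 0 := by
      rw [hcoeff]
      intro habs
      exact hres (h.coeff 0) (by linear_combination habs - (c.coeff 0) * h2)
    have hne : h^2 + h + c ≠ 0 := fun h0 => hne0 (by simp [h0])
    refine ⟨hne, ?_⟩
    have hub := HahnSeries.order_le_of_coeff_ne_zero hne0
    have hlb := HahnSeries.min_order_le_order_add (x := h^2 + h) (y := c) hne
    have : (h^2+h+c).order = 0 := by omega
    rw [this]; exact Even.zero
  · -- order (h²+h) < 0 = order c
    obtain ⟨hne, heq⟩ := order_add_of_lt (y := c) hg (by omega)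
    exact ⟨hne, by rw [heq]; exact heven⟩

end ASaux

namespace ASaux

open Polynomial

section NormLemmas

variable {K L : Type*} [Field K] [Field L] [Algebra K L]

lemma asPoly_deg (c : K) : (X^2 + X + C c : K[X]).degree = 2 := by
  have h1 : (X + C c : K[X]).degree < (X^2 : K[X]).degree := by
    rw [degree_X_pow]
    apply lt_of_le_of_lt (degree_add_le _ _)
    rw [degree_X, max_lt_iff]
    exact ⟨by norm_num, lt_of_le_of_lt degree_C_le (by norm_num)⟩
  rw [add_assoc, degree_add_eq_left_of_degree_lt h1, degree_X_pow]
  rfl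

lemma asPoly_natDegree (c : K) : (X^2 + X + C c : K[X]).natDegree = 2 :=
  natDegree_eq_of_degree_eq_some (asPoly_deg c)

lemma asPoly_monic (c : K) : (X^2 + X + C c : K[X]).Monic := by
  have h1 : (X + C c : K[X]).degree < (2 : ℕ) := by
    apply lt_of_le_of_lt (degree_add_le _ _)
    rw [degree_X, max_lt_iff]
    constructor
    · exact_mod_cast by norm_num
    · exact lt_of_le_of_lt degree_C_le (by exact_mod_cast by norm_num)
  have := monic_X_pow_add (n := 2) h1
  rwa [add_assoc]

lemma minpoly_AS (x : L) (c : K)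
    (hx : x ∉ Set.range (algebraMap K L)) (hroot : x^2 + x + algebraMap K L c = 0) :
    minpoly K x = X^2 + X + C c ∧ IsIntegral K x ∧ (minpoly K x).natDegree = 2 := by
  set p : K[X] := X^2 + X + C c with hp
  have haev : Polynomial.aeval x p = 0 := by
    rw [hp]
    simp only [map_add, map_pow, Polynomial.aeval_X, Polynomial.aeval_C]
    exact hroot
  have hint : IsIntegral K x := ⟨p, asPoly_monic c, haev⟩
  have hdvd : minpoly K x ∣ p := minpoly.dvd K x haev
  have hpne : p ≠ 0 := (asPoly_monic c).ne_zero
  have hdeg2 : (minpoly K x).natDegree = 2 := by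
    have hle : (minpoly K x).natDegree ≤ 2 := by
      have := Polynomial.natDegree_le_of_dvd hdvd hpne
      rwa [asPoly_natDegree] at this
    have hpos : 0 < (minpoly K x).natDegree := minpoly.natDegree_pos hint
    have hne1 : (minpoly K x).natDegree ≠ 1 := by
      intro h1
      exact hx (by simpa [RingHom.mem_range] using (minpoly.natDegree_eq_one_iff).mp h1)
    omega
  refine ⟨?_, hint, hdeg2⟩
  obtain ⟨q, hq⟩ := hdvd
  have hmne : minpoly K x ≠ 0 := minpoly.ne_zero hint
  have hqne : q ≠ 0 := by rintro rfl; rw [mul_zero] at hq; exact hpne hq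
  have hqdeg : q.natDegree = 0 := by
    have := congrArg Polynomial.natDegree hq
    rw [Polynomial.natDegree_mul hmne hqne, asPoly_natDegree, hdeg2] at this
    omega
  have hqlead : q.leadingCoeff = 1 := by
    have := congrArg Polynomial.leadingCoeff hq
    rw [Polynomial.leadingCoeff_mul, (asPoly_monic c).leadingCoeff,
      (minpoly.monic hint).leadingCoeff, one_mul] at this
    exact this.symm
  have hq1 : q = 1 := Polynomial.eq_one_of_monic_natDegree_zero hqlead hqdeg
  rw [hq1, mul_one] at hq
  exact hq.symm

lemma norm_AS (h2 : (2:K) = 0) (hrank : Module.finrank K L = 2) (x : L)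
    (hx : x ∉ Set.range (algebraMap K L)) (c : K)
    (hroot : x^2 + x + algebraMap K L c = 0) : Algebra.norm K x = c := by
  have h2L : (2:L) = 0 := by
    rw [← map_ofNat (algebraMap K L) 2, h2, map_zero]
  have hnegL : ∀ y : L, -y = y := fun y => by linear_combination (-y) * h2L
  haveI : Module.Finite K L := Module.finite_of_finrank_eq_succ (n := 1) (by rw [hrank])
  have li : LinearIndependent K ![1, x] := by
    rw [LinearIndependent.pair_iff]
    intro s t hst
    rw [Algebra.smul_def, mul_one, Algebra.smul_def] at hst
    by_cases ht : t = 0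
    · refine ⟨?_, ht⟩
      rw [ht, map_zero, zero_mul, add_zero] at hst
      exact (_root_.map_eq_zero _).mp hst
    · exfalso
      apply hx
      refine ⟨-(s/t), ?_⟩
      have htL : algebraMap K L t ≠ 0 := fun h0 => ht ((_root_.map_eq_zero _).mp h0)
      rw [map_neg, map_div₀, neg_eq_iff_eq_neg, div_eq_iff htL, eq_comm]
      linear_combination -hst
  have hcard : Fintype.card (Fin 2) = Module.finrank K L := by
    rw [hrank, Fintype.card_fin]
  set B := basisOfLinearIndependentOfCardEqFinrank li hcard with hBdef
  have hB : ⇑B = ![1, x] := coe_basisOfLinearIndependentOfCardEqFinrank li hcard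
  have hB0 : B 0 = 1 := by rw [hB]; rfl
  have hB1 : B 1 = x := by rw [hB]; rfl
  rw [Algebra.norm_eq_matrix_det B]
  have hxB0 : x * B 0 = B 1 := by rw [hB0, hB1, mul_one]
  have hxx : x * x = algebraMap K L c + x := by
    have h' := hroot
    rw [pow_two] at h'
    linear_combination h' - (x + algebraMap K L c) * h2L
  have hxB1 : x * B 1 = c • B 0 + B 1 := by
    rw [hB0, hB1, Algebra.smul_def, mul_one]
    exact hxx
  have hM : Algebra.leftMulMatrix B x = !![0, c; 1, 1] := by
    ext i j
    rw [Algebra.leftMulMatrix_eq_repr_mul]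
    fin_cases i <;> fin_cases j <;>
      simp [hxB0, hxB1, Module.Basis.repr_self, map_add, Finsupp.single_apply]
  rw [hM, Matrix.det_fin_two_of]
  linear_combination (-c) * h2

end NormLemmas

end ASaux

namespace ASaux

section NormShape

open Polynomial

variable {K L : Type*} [Field K] [Field L] [Algebra K L]

lemma exists_basis_pair (hrank : Module.finrank K L = 2) {x : L}
    (hx : x ∉ Set.range (algebraMap K L)) :
    ∃ B : Module.Basis (Fin 2) K L, B 0 = 1 ∧ B 1 = x := by
  haveI : Module.Finite K L := Module.finite_of_finrank_eq_succ (n := 1) (by rw [hrank])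
  have li : LinearIndependent K ![1, x] := by
    rw [LinearIndependent.pair_iff]
    intro s t hst
    rw [Algebra.smul_def, mul_one, Algebra.smul_def] at hst
    by_cases ht : t = 0
    · refine ⟨?_, ht⟩
      rw [ht, map_zero, zero_mul, add_zero] at hst
      exact (_root_.map_eq_zero _).mp hst
    · exfalso
      apply hx
      refine ⟨-(s/t), ?_⟩
      have htL : algebraMap K L t ≠ 0 := fun h0 => ht ((_root_.map_eq_zero _).mp h0)
      rw [map_neg, map_div₀, neg_eq_iff_eq_neg, div_eq_iff htL, eq_comm]
      linear_combination -hst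
  have hcard : Fintype.card (Fin 2) = Module.finrank K L := by
    rw [hrank, Fintype.card_fin]
  refine ⟨basisOfLinearIndependentOfCardEqFinrank li hcard, ?_, ?_⟩ <;>
    rw [coe_basisOfLinearIndependentOfCardEqFinrank li hcard] <;> rfl

lemma norm_shape (h2 : (2:K) = 0) (hrank : Module.finrank K L = 2) {x' : L}
    (hx' : x' ∉ Set.range (algebraMap K L)) {a' : K}
    (hroot : x'^2 + x' + algebraMap K L a' = 0) (x₀ : L) (hx₀ : x₀ ≠ 0) :
    (∃ c : K, c ≠ 0 ∧ Algebra.norm K x₀ = c^2) ∨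
    (∃ d g : K, d ≠ 0 ∧ Algebra.norm K x₀ = d^2 * (g^2+g+a')) := by
  have h2L : (2:L) = 0 := by rw [← map_ofNat (algebraMap K L) 2, h2, map_zero]
  obtain ⟨B, hB0, hB1⟩ := exists_basis_pair hrank hx'
  set c := B.repr x₀ 0 with hc
  set d := B.repr x₀ 1 with hd
  have hdecomp : x₀ = algebraMap K L c + algebraMap K L d * x' := by
    have hsum := B.sum_repr x₀
    rw [Fin.sum_univ_two, hB0, hB1, Algebra.smul_def, mul_one, Algebra.smul_def] at hsum
    exact hsum.symm
  by_cases hdz : d = 0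
  · left
    have hxc : x₀ = algebraMap K L c := by rw [hdecomp, hdz, map_zero, zero_mul, add_zero]
    have hcne : c ≠ 0 := by
      intro hc0; exact hx₀ (by rw [hxc, hc0, map_zero])
    refine ⟨c, hcne, ?_⟩
    rw [hxc, Algebra.norm_algebraMap, hrank]
  · right
    set g := c / d with hg
    set w : L := algebraMap K L g + x' with hw
    have hx₀w : x₀ = algebraMap K L d * w := by
      rw [hw, mul_add, ← map_mul, hdecomp, hg, mul_div_cancel₀ _ hdz]
    have hwnr : w ∉ Set.range (algebraMap K L) := by
      rintro ⟨k, hk⟩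
      exact hx' ⟨k - g, by rw [map_sub, hk, hw]; ring⟩
    have hwroot : w^2 + w + algebraMap K L (g^2+g+a') = 0 := by
      rw [hw, map_add, map_add, map_pow]
      linear_combination hroot + ((algebraMap K L g)^2 + algebraMap K L g +
        algebraMap K L g * x') * h2L
    have hnw : Algebra.norm K w = g^2+g+a' := norm_AS h2 hrank w hwnr _ hwroot
    refine ⟨d, g, hdz, ?_⟩
    rw [hx₀w, map_mul, hnw, Algebra.norm_algebraMap, hrank]

end NormShape

variable {F : Type*} [Field F]

lemma X_zpow (z : ℤ) :
    (algebraMap (PowerSeries F) (LaurentSeries F) PowerSeries.X) ^ z =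
      HahnSeries.single z (1 : F) := by
  rw [algebraMap_eq_coe, HahnSeries.ofPowerSeries_X, ← RatFunc.single_zpow]

end ASaux

namespace ASaux

set_option synthInstance.maxHeartbeats 1000000 in
set_option maxHeartbeats 1000000 in
open IntermediateField in
lemma adjoin_gen_shift {K E : Type*} [Field K] [Field E] [Algebra K E] (h2K : (2 : K) = 0)
    {a : K} {b : E} (hb : b ^ 2 + b = algebraMap K E a)
    (hnr : b ∉ Set.range (algebraMap K E)) (h₀ : K) :
    ∃ x' : K⟮b⟯,
      x' ∉ Set.range (algebraMap K K⟮b⟯) ∧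
      x'^2 + x' + algebraMap K K⟮b⟯ (h₀^2+h₀+a) = 0 := by
  have h2E : (2 : E) = 0 := by
    rw [← map_ofNat (algebraMap K E) 2, h2K, map_zero]
  set L := K⟮b⟯ with hL
  set f := algebraMap (↥L) E with hf
  have hinj : Function.Injective f := RingHom.injective _
  have hgen : f (IntermediateField.AdjoinSimple.gen K b) = b :=
    IntermediateField.AdjoinSimple.algebraMap_gen _ _
  have htower : ∀ y : K, f (algebraMap K L y) = algebraMap K E y := by
    intro y
    rw [hf, ← IsScalarTower.algebraMap_apply]
  refine ⟨IntermediateField.AdjoinSimple.gen K b + algebraMap K L h₀, ?_, ?_⟩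
  · rintro ⟨k, hk⟩
    apply hnr
    refine ⟨k - h₀, ?_⟩
    have hmap : algebraMap K L (k - h₀) = IntermediateField.AdjoinSimple.gen K b := by
      rw [map_sub, hk]; ring
    rw [← hgen, ← hmap, htower]
  · apply hinj
    rw [map_add f, map_add f, map_pow f, map_add f, map_zero f, hgen, htower, htower]
    set c := algebraMap K E h₀ with hcdef
    rw [map_add, map_add, map_pow]
    linear_combination hb + (algebraMap K E a + b*c + c^2 + c) * h2E

end ASaux

open ASaux in
/-- for `b` in an algebraic closure of `K` with `b² + b = a`,
`D(a) = (π^{-2t+1})` for some `t > 0` if and only if `K(b)/K` is a ramified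
quadratic extension. -/
theorem ASdefect_eq_odd_neg_iff_ramified (τ : ℕ) (hτ : 0 < τ) (a : Kk τ)
    (b : AlgebraicClosure (Kk τ))
    (hb : b ^ 2 + b = algebraMap (Kk τ) (AlgebraicClosure (Kk τ)) a) :
    (∃ t : ℕ, 0 < t ∧
        ASdefect τ a = Submodule.span (Ok τ) {pp τ ^ (-2 * (t : ℤ) + 1)}) ↔
      IsRamifiedQuadExt τ ((Kk τ)⟮b⟯) := by
  classical
  have h2F : (2 : Fq τ) = 0 := by
    have h := CharP.cast_eq_zero (Fq τ) 2
    exact_mod_cast h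
  have h2K : (2 : Kk τ) = 0 := two_eq_zero_K h2F
  have h2AC : (2 : AlgebraicClosure (Kk τ)) = 0 := by
    rw [← map_ofNat (algebraMap (Kk τ) (AlgebraicClosure (Kk τ))) 2, h2K, map_zero]
  have hsq : ∀ c : Fq τ, ∃ e : Fq τ, e^2 = c := by
    have hinj : Function.Injective (fun e : Fq τ => e^2) := by
      intro e1 e2 h
      simp only at h
      have hsq0 : (e1 - e2)^2 = 0 := by linear_combination h + (e2^2 - e1*e2) * h2F
      exact sub_eq_zero.mp (pow_eq_zero_iff (by norm_num : (2:ℕ) ≠ 0) |>.mp hsq0)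
    exact fun c => Finite.injective_iff_surjective.mp hinj c
  have hACinj : Function.Injective (algebraMap (Kk τ) (AlgebraicClosure (Kk τ))) :=
    RingHom.injective _
  constructor
  · -- forward direction
    rintro ⟨t, ht, hD⟩
    have hz : ∀ z : ℤ, pp τ ^ z = HahnSeries.single z (1 : Fq τ) := fun z => X_zpow z
    have hppne : pp τ ^ (-2*(t:ℤ)+1) ≠ 0 := by
      rw [hz]; exact HahnSeries.single_ne_zero one_ne_zero
    have hmem : ∀ h : Kk τ, pp τ ^ (-2*(t:ℤ)+1) ∈ Submodule.span (Ok τ) {h^2+h+a} := by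
      intro h
      have hm : pp τ ^ (-2*(t:ℤ)+1) ∈ ASdefect τ a := by
        rw [hD]; exact Submodule.mem_span_singleton_self _
      rw [ASdefect] at hm
      exact (Submodule.mem_iInf _).mp hm h
    have hA : ∀ h : Kk τ, h^2+h+a ≠ 0 := by
      intro h h0
      have := hmem h
      rw [h0, Submodule.span_zero_singleton] at this
      exact hppne (by simpa using this)
    have horder : ∀ h : Kk τ, (h^2+h+a).order ≤ -2*(t:ℤ)+1 := by
      intro h
      rcases (mem_span_singleton_iff (hA h) _).mp (hmem h) with h0 | hle
      · exact absurd h0 hppne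
      · rwa [hz, HahnSeries.order_single one_ne_zero] at hle
    have hexists : ∃ h₀ : Kk τ, (h₀^2+h₀+a).order = -2*(t:ℤ)+1 := by
      by_contra hcon
      push_neg at hcon
      have hmem2 : pp τ ^ (-2*(t:ℤ)) ∈ ASdefect τ a := by
        rw [ASdefect]
        refine (Submodule.mem_iInf _).mpr (fun h => ?_)
        rw [mem_span_singleton_iff (hA h)]
        right
        rw [hz, HahnSeries.order_single one_ne_zero]
        have h1 := horder h
        have h2 := hcon h
        omega
      rw [hD] at hmem2
      rcases (mem_span_singleton_iff hppne _).mp hmem2 with h0 | hle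
      · rw [hz] at h0
        exact HahnSeries.single_ne_zero one_ne_zero h0
      · rw [hz, hz, HahnSeries.order_single one_ne_zero,
          HahnSeries.order_single one_ne_zero] at hle
        omega
    obtain ⟨h₀, hord0⟩ := hexists
    have hnr : b ∉ Set.range (algebraMap (Kk τ) (AlgebraicClosure (Kk τ))) := by
      rintro ⟨k, rfl⟩
      apply hA k
      have hmapeq : algebraMap (Kk τ) (AlgebraicClosure (Kk τ)) (k^2+k) =
          algebraMap (Kk τ) (AlgebraicClosure (Kk τ)) a := by
        rw [map_add, map_pow]; exact hb
      have hk : k^2 + k = a := hACinj hmapeq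
      linear_combination hk + a * h2K
    have hroot_b : b^2 + b + algebraMap (Kk τ) (AlgebraicClosure (Kk τ)) a = 0 := by
      linear_combination hb + (algebraMap (Kk τ) (AlgebraicClosure (Kk τ)) a) * h2AC
    obtain ⟨hmin, hint, hdeg⟩ := minpoly_AS b a hnr hroot_b
    have hrank : Module.finrank (Kk τ) ((Kk τ)⟮b⟯) = 2 := by
      rw [IntermediateField.adjoin.finrank hint, hdeg]
    obtain ⟨x', hx'nr, hx'root⟩ := adjoin_gen_shift h2K hb hnr h₀
    have hnorm : Algebra.norm (Kk τ) x' = h₀^2+h₀+a :=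
      norm_AS h2K hrank x' hx'nr _ hx'root
    refine ⟨hrank, x', ?_, ?_⟩
    · intro h0
      exact hx'nr ⟨0, by rw [map_zero, h0]⟩
    · rw [hnorm, hord0]
      exact ⟨-(t:ℤ), by ring⟩
  · -- reverse direction
    rintro ⟨hrank, x₀, hx₀ne, hx₀odd⟩
    have hnr : b ∉ Set.range (algebraMap (Kk τ) (AlgebraicClosure (Kk τ))) := by
      intro hmem
      have hbot : (Kk τ)⟮b⟯ = ⊥ :=
        IntermediateField.adjoin_simple_eq_bot_iff.mpr (IntermediateField.mem_bot.mpr hmem)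
      rw [hbot, IntermediateField.finrank_bot] at hrank
      exact absurd hrank (by norm_num)
    have hA : ∀ h : Kk τ, h^2+h+a ≠ 0 := by
      intro h h0
      set c := algebraMap (Kk τ) (AlgebraicClosure (Kk τ)) h with hcdef
      have h0' : algebraMap (Kk τ) (AlgebraicClosure (Kk τ)) (h^2+h+a) = 0 := by
        rw [h0, map_zero]
      rw [map_add, map_add, map_pow] at h0'
      have hfac : (b + c) * (b + c + 1) = 0 := by
        linear_combination hb + h0' + (b*c) * h2AC
      rcases mul_eq_zero.mp hfac with h1 | h2
      · exact hnr ⟨-h, by rw [map_neg]; linear_combination -h1⟩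
      · exact hnr ⟨-h - 1, by rw [map_sub, map_neg, map_one]; linear_combination -h2⟩
    obtain ⟨h₀, H⟩ := reduce h2F hsq a
    rcases H with h0 | ⟨hne, hord, hodd⟩ | ⟨hne, hord0, hres⟩
    · exact absurd h0 (hA h₀)
    · -- odd negative order: ramified, compute the defect
      obtain ⟨s, hs⟩ := hodd
      refine ⟨(-s).toNat, by omega, ?_⟩
      have htz : -2*((((-s).toNat) : ℕ) : ℤ)+1 = (h₀^2+h₀+a).order := by omega
      have hz : pp τ ^ ((h₀^2+h₀+a).order) =
          HahnSeries.single ((h₀^2+h₀+a).order) (1 : Fq τ) := X_zpow _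
      rw [htz, ASdefect, hz]
      have hkey : ∀ h : Kk τ, h^2+h+a ≠ 0 ∧ (h^2+h+a).order ≤ (h₀^2+h₀+a).order := by
        intro h
        have hrw : h^2+h+a = (h+h₀)^2 + (h+h₀) + (h₀^2+h₀+a) := by
          linear_combination (-(h*h₀) - h₀^2 - h₀) * h2K
        rw [hrw]
        exact key1 hne hord ⟨s, hs⟩ (h+h₀)
      apply le_antisymm
      · refine le_trans (iInf_le _ h₀) (le_of_eq ?_)
        exact span_singleton_eq_of_order_eq hne (HahnSeries.single_ne_zero one_ne_zero)
          (by rw [HahnSeries.order_single one_ne_zero])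
      · refine le_iInf (fun h => ?_)
        rw [Submodule.span_singleton_le_iff_mem, mem_span_singleton_iff (hkey h).1]
        right
        rw [HahnSeries.order_single one_ne_zero]
        exact (hkey h).2
    · -- residue case: unramified, contradiction with the odd-norm witness
      exfalso
      obtain ⟨x', hx'nr, hx'root⟩ := adjoin_gen_shift h2K hb hnr h₀
      rcases norm_shape h2K hrank hx'nr hx'root x₀ hx₀ne with ⟨c, hc, hnorm⟩ |
        ⟨d, g, hd, hnorm⟩
      · rw [hnorm, order_sq hc] at hx₀odd
        obtain ⟨s, hs⟩ := hx₀odd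
        omega
      · obtain ⟨hane, haeven⟩ := key2 h2F hord0 hres g
        rw [hnorm, HahnSeries.order_mul (pow_ne_zero 2 hd) hane, order_sq hd] at hx₀odd
        obtain ⟨r, hr⟩ := haeven
        obtain ⟨s, hs⟩ := hx₀odd
        omega
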